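/- For every nonnegative integer n and every complex number z, ∑_{k=0}^{⌊n/2⌋} (4^{n-2k}/(2k+1)) · C(n,2k) · B_{n-2k}(z) = ∑_{j=0}^{n} (-1)^{n-j} · 2^j · C(n,j) · E_j(2z) = 2^n · E_n(2z - 1/2), where C(n,k) denotes the binomial coefficient. -/

import Mathlib

open Finset

/-- The Bernoulli polynomial `B_n` evaluated at a complex number `z`,
with generating function `t·e^{zt}/(e^t−1) = ∑_{n≥0} B_n(z)·t^n/n!`. -/
noncomputable def bernoulliPoly (n : ℕ) (z : ℂ) : ℂ :=
  Polynomial.aeval z (Polynomial.bernoulli n)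

/-- The Euler polynomial `E_n` evaluated at a complex number `z`,
with generating function `2·e^{zt}/(e^t+1) = ∑_{n≥0} E_n(z)·t^n/n!`,
given by the explicit formula `E_n(z) = ∑_{k=0}^n 2^{-k} ∑_{j=0}^k (-1)^j C(k,j)(z+j)^n`. -/
noncomputable def eulerPoly (n : ℕ) (z : ℂ) : ℂ :=
  ∑ k ∈ range (n + 1), (1 / 2 ^ k : ℂ) *
    ∑ j ∈ range (k + 1), (-1) ^ j * (k.choose j : ℂ) * (z + j) ^ n


lemma pascal_split (m : ℕ) (f : ℕ → ℂ) :
    ∑ j ∈ range (m + 2), (-1 : ℂ) ^ j * ((m + 1).choose j : ℂ) * f j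
      = ∑ j ∈ range (m + 1), (-1 : ℂ) ^ j * (m.choose j : ℂ) * (f j - f (j + 1)) := by
  have h0 : ∑ j ∈ range (m + 2), (-1 : ℂ) ^ j * ((m + 1).choose j : ℂ) * f j
      = (∑ j ∈ range (m + 1), (-1 : ℂ) ^ (j+1) * ((m + 1).choose (j+1) : ℂ) * f (j+1)) + f 0 := by
    rw [Finset.sum_range_succ']
    simp
  have h1 : ∀ j, ((m + 1).choose (j+1) : ℂ) = (m.choose j : ℂ) + (m.choose (j+1) : ℂ) := by
    intro j
    rw [Nat.choose_succ_succ]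
    push_cast
    ring
  have h2 : ∑ j ∈ range (m + 1), (-1 : ℂ) ^ j * (m.choose (j+1) : ℂ) * f (j+1)
      = f 0 - ∑ j ∈ range (m + 1), (-1 : ℂ) ^ j * (m.choose j : ℂ) * f j := by
    rw [Finset.sum_range_succ, Nat.choose_succ_self]
    rw [Finset.sum_range_succ' (fun j => (-1 : ℂ) ^ j * (m.choose j : ℂ) * f j)]
    have : ∀ j ∈ range m, (-1 : ℂ) ^ j * (m.choose (j+1) : ℂ) * f (j+1)
        = -((-1 : ℂ) ^ (j+1) * (m.choose (j+1) : ℂ) * f (j+1)) := by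
      intro j _; ring
    rw [Finset.sum_congr rfl this, Finset.sum_neg_distrib]
    simp
  have h3 : ∑ j ∈ range (m + 1), (-1 : ℂ) ^ j * (m.choose j : ℂ) * (f j - f (j + 1))
      = (∑ j ∈ range (m + 1), (-1 : ℂ) ^ j * (m.choose j : ℂ) * f j)
        - ∑ j ∈ range (m + 1), (-1 : ℂ) ^ j * (m.choose j : ℂ) * f (j+1) := by
    rw [← Finset.sum_sub_distrib]
    exact Finset.sum_congr rfl fun j _ => by ring
  rw [h0, h3]
  have h4 : ∀ j ∈ range (m+1), (-1 : ℂ) ^ (j+1) * ((m + 1).choose (j+1) : ℂ) * f (j+1)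
      = -((-1 : ℂ) ^ j * (m.choose j : ℂ) * f (j+1)) + -((-1 : ℂ) ^ j * (m.choose (j+1) : ℂ) * f (j+1)) := by
    intro j _; rw [h1]; ring
  rw [Finset.sum_congr rfl h4, Finset.sum_add_distrib, Finset.sum_neg_distrib,
    Finset.sum_neg_distrib, h2]
  ring

lemma diff_vanish : ∀ (m n : ℕ), n < m → ∀ z : ℂ,
    ∑ j ∈ range (m + 1), (-1:ℂ)^j * (m.choose j : ℂ) * (z + j)^n = 0 := by
  intro m
  induction m with
  | zero => intro n h; omega
  | succ m ih =>
    intro n hn z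
    have h1 : ∑ j ∈ range (m + 1 + 1), (-1:ℂ)^j * ((m+1).choose j : ℂ) * (z + (j:ℕ))^n
        = ∑ j ∈ range (m + 1), (-1:ℂ)^j * (m.choose j : ℂ) * ((z + (j:ℕ))^n - (z + ((j+1:ℕ)))^n) :=
      pascal_split m (fun j => (z + (j:ℕ))^n)
    rw [h1]
    have h2 : ∀ j ∈ range (m+1), (-1:ℂ)^j * (m.choose j : ℂ) * ((z + (j:ℕ))^n - (z + ((j+1:ℕ):ℂ))^n)
        = ∑ i ∈ range n, -((n.choose i : ℂ) * ((-1:ℂ)^j * (m.choose j : ℂ) * (z + (j:ℕ))^i)) := by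
      intro j _
      have hb : (z + (j:ℂ) + 1)^n = ∑ i ∈ range (n+1), (z + (j:ℂ))^i * (n.choose i : ℂ) := by
        rw [add_pow]; simp
      have hd : (z + ((j+1:ℕ):ℂ))^n = (z + (j:ℂ))^n + ∑ i ∈ range n, (z + (j:ℂ))^i * (n.choose i : ℂ) := by
        push_cast
        rw [← add_assoc, hb, Finset.sum_range_succ]
        simp [add_comm]
      rw [hd]
      have e1 : ∑ i ∈ range n, -((n.choose i : ℂ) * ((-1:ℂ)^j * (m.choose j : ℂ) * (z + (j:ℂ))^i))
          = -((-1:ℂ)^j * (m.choose j : ℂ) * ∑ i ∈ range n, (z + (j:ℂ))^i * (n.choose i : ℂ)) := by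
        rw [Finset.mul_sum, ← Finset.sum_neg_distrib]
        exact Finset.sum_congr rfl fun i _ => by ring
      rw [e1]; ring
    rw [Finset.sum_congr rfl h2, Finset.sum_comm]
    apply Finset.sum_eq_zero
    intro i hi
    rw [Finset.sum_neg_distrib, ← Finset.mul_sum, ih i (by have := Finset.mem_range.mp hi; omega) z, mul_zero, neg_zero]

noncomputable def altSum (n : ℕ) (x : ℂ) (k : ℕ) : ℂ :=
  ∑ i ∈ range (k + 1), (-1 : ℂ) ^ i * (k.choose i : ℂ) * (x + i) ^ n

lemma altSum_vanish (n k : ℕ) (h : n < k) (x : ℂ) : altSum n x k = 0 :=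
  diff_vanish k n h x

lemma eulerPoly_eq_altSum (n : ℕ) (x : ℂ) :
    eulerPoly n x = ∑ k ∈ range (n + 1), (1 / 2 ^ k : ℂ) * altSum n x k := rfl

lemma altSum_succ (n : ℕ) (x : ℂ) (k : ℕ) :
    altSum n x (k + 1) = altSum n x k - altSum n (x + 1) k := by
  have hp := pascal_split k (fun i => (x + (i : ℕ)) ^ n)
  have e : altSum n x (k + 1) = ∑ j ∈ range (k + 2), (-1 : ℂ) ^ j * ((k + 1).choose j : ℂ) * (x + (j : ℕ)) ^ n := by
    unfold altSum
    norm_num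
  rw [e, hp]
  unfold altSum
  rw [← Finset.sum_sub_distrib]
  refine Finset.sum_congr rfl fun i _ => ?_
  have h1 : (x + ((i + 1 : ℕ) : ℂ)) = (x + 1) + (i : ℂ) := by push_cast; ring
  rw [h1]
  ring

lemma euler_reflect (n : ℕ) (x : ℂ) : eulerPoly n x + eulerPoly n (x + 1) = 2 * x ^ n := by
  rw [eulerPoly_eq_altSum, eulerPoly_eq_altSum, ← Finset.sum_add_distrib]
  have key : ∀ k ∈ range (n + 1), (1 / 2 ^ k : ℂ) * altSum n x k + (1 / 2 ^ k : ℂ) * altSum n (x + 1) k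
      = (fun k => 2 * (1 / 2 ^ k : ℂ) * altSum n x k) k
        - (fun k => 2 * (1 / 2 ^ k : ℂ) * altSum n x k) (k + 1) := by
    intro k _
    have h2 : altSum n (x + 1) k = altSum n x k - altSum n x (k + 1) := by
      rw [altSum_succ]; ring
    rw [h2]
    show _ = 2 * (1 / 2 ^ k : ℂ) * altSum n x k - 2 * (1 / 2 ^ (k+1) : ℂ) * altSum n x (k+1)
    rw [pow_succ]
    have h2k : (2:ℂ) ^ k ≠ 0 := pow_ne_zero _ two_ne_zero
    field_simp
    ring
  rw [Finset.sum_congr rfl key, Finset.sum_range_sub']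
  rw [altSum_vanish n (n + 1) (by omega) x]
  unfold altSum
  simp

lemma euler_extend (j n : ℕ) (h : j ≤ n) (w : ℂ) :
    eulerPoly j w = ∑ k ∈ range (n + 1), (1 / 2 ^ k : ℂ) * altSum j w k := by
  rw [eulerPoly_eq_altSum]
  apply Finset.sum_subset (Finset.range_subset_range.mpr (by omega))
  intro k _ hk'
  rw [altSum_vanish j k (by simp at hk'; omega) w, mul_zero]

lemma binom_step (n : ℕ) (w : ℂ) :
    ∑ j ∈ range (n + 1), (-1 : ℂ) ^ (n - j) * 2 ^ j * (n.choose j : ℂ) * w ^ j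
      = (2 * w - 1) ^ n := by
  rw [show (2 * w - 1 : ℂ) = (2 * w) + (-1) by ring, add_pow]
  refine Finset.sum_congr rfl fun j _ => ?_
  rw [mul_pow]
  ring

lemma part2 (n : ℕ) (z : ℂ) :
    ∑ j ∈ range (n + 1), (-1 : ℂ) ^ (n - j) * 2 ^ j * (n.choose j : ℂ) * eulerPoly j (2 * z)
      = 2 ^ n * eulerPoly n (2 * z - 1 / 2) := by
  have e1 : ∑ j ∈ range (n + 1), (-1 : ℂ) ^ (n - j) * 2 ^ j * (n.choose j : ℂ) * eulerPoly j (2 * z)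
      = ∑ j ∈ range (n + 1), ∑ k ∈ range (n + 1), ∑ i ∈ range (k + 1),
          ((-1 : ℂ) ^ i * (k.choose i : ℂ) * (1 / 2 ^ k : ℂ))
            * ((-1 : ℂ) ^ (n - j) * 2 ^ j * (n.choose j : ℂ) * (2 * z + (i : ℂ)) ^ j) := by
    refine Finset.sum_congr rfl fun j hj => ?_
    rw [euler_extend j n (Nat.lt_succ_iff.mp (Finset.mem_range.mp hj)) (2 * z), Finset.mul_sum]
    refine Finset.sum_congr rfl fun k _ => ?_
    unfold altSum
    rw [Finset.mul_sum, Finset.mul_sum]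
    refine Finset.sum_congr rfl fun i _ => ?_
    ring
  rw [e1]
  rw [show (∑ j ∈ range (n + 1), ∑ k ∈ range (n + 1),
        ∑ i ∈ range (k + 1),
          ((-1 : ℂ) ^ i * (k.choose i : ℂ) * (1 / 2 ^ k : ℂ))
            * ((-1 : ℂ) ^ (n - j) * 2 ^ j * (n.choose j : ℂ) * (2 * z + (i : ℂ)) ^ j))
      = ∑ k ∈ range (n + 1), ∑ j ∈ range (n + 1),
        ∑ i ∈ range (k + 1),
          ((-1 : ℂ) ^ i * (k.choose i : ℂ) * (1 / 2 ^ k : ℂ))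
            * ((-1 : ℂ) ^ (n - j) * 2 ^ j * (n.choose j : ℂ) * (2 * z + (i : ℂ)) ^ j)
      from Finset.sum_comm]
  have e2 : ∀ k ∈ range (n + 1), ∑ j ∈ range (n + 1), ∑ i ∈ range (k + 1),
          ((-1 : ℂ) ^ i * (k.choose i : ℂ) * (1 / 2 ^ k : ℂ))
            * ((-1 : ℂ) ^ (n - j) * 2 ^ j * (n.choose j : ℂ) * (2 * z + (i : ℂ)) ^ j)
      = (1 / 2 ^ k : ℂ) * ∑ i ∈ range (k + 1),
          (-1 : ℂ) ^ i * (k.choose i : ℂ) * ((2 * z - 1 / 2 + (i : ℂ)) ^ n * 2 ^ n) := by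
    intro k _
    rw [show (∑ j ∈ range (n + 1), ∑ i ∈ range (k + 1),
          ((-1 : ℂ) ^ i * (k.choose i : ℂ) * (1 / 2 ^ k : ℂ))
            * ((-1 : ℂ) ^ (n - j) * 2 ^ j * (n.choose j : ℂ) * (2 * z + (i : ℂ)) ^ j))
        = ∑ i ∈ range (k + 1), ∑ j ∈ range (n + 1),
          ((-1 : ℂ) ^ i * (k.choose i : ℂ) * (1 / 2 ^ k : ℂ))
            * ((-1 : ℂ) ^ (n - j) * 2 ^ j * (n.choose j : ℂ) * (2 * z + (i : ℂ)) ^ j)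
        from Finset.sum_comm]
    rw [Finset.mul_sum]
    refine Finset.sum_congr rfl fun i _ => ?_
    have e3 : ∑ j ∈ range (n + 1),
          ((-1 : ℂ) ^ i * (k.choose i : ℂ) * (1 / 2 ^ k : ℂ))
            * ((-1 : ℂ) ^ (n - j) * 2 ^ j * (n.choose j : ℂ) * (2 * z + (i : ℂ)) ^ j)
        = ((-1 : ℂ) ^ i * (k.choose i : ℂ) * (1 / 2 ^ k : ℂ))
            * ∑ j ∈ range (n + 1), (-1 : ℂ) ^ (n - j) * 2 ^ j * (n.choose j : ℂ) * (2 * z + (i : ℂ)) ^ j := by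
      rw [Finset.mul_sum]
    rw [e3, binom_step]
    have e4 : (2 * (2 * z + (i : ℂ)) - 1) ^ n = (2 * z - 1 / 2 + (i : ℂ)) ^ n * 2 ^ n := by
      rw [show (2 * (2 * z + (i : ℂ)) - 1) = (2 * z - 1 / 2 + (i : ℂ)) * 2 by ring, mul_pow]
    rw [e4]
    ring
  rw [Finset.sum_congr rfl e2]
  rw [eulerPoly_eq_altSum n (2 * z - 1 / 2)]
  rw [Finset.mul_sum (range (n + 1)) (fun k => (1 / 2 ^ k : ℂ) * altSum n (2 * z - 1 / 2) k) ((2 : ℂ) ^ n)]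
  refine Finset.sum_congr rfl fun k _ => ?_
  have hs : ∑ i ∈ range (k + 1),
        (-1 : ℂ) ^ i * (k.choose i : ℂ) * ((2 * z - 1 / 2 + (i : ℂ)) ^ n * 2 ^ n)
      = 2 ^ n * altSum n (2 * z - 1 / 2) k := by
    unfold altSum
    rw [Finset.mul_sum]
    exact Finset.sum_congr rfl fun i _ => by ring
  rw [hs]
  ring


lemma rigid (D : Polynomial ℂ) (c : ℂ) (hD : ∀ z : ℂ, D.eval (z + c) + D.eval z = 0) :
    D = 0 := by
  have hcomp : D.comp (Polynomial.X + Polynomial.C c) + D = 0 := by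
    apply Polynomial.funext
    intro z
    simp [Polynomial.eval_comp, hD z]
  have h2 : D.comp (Polynomial.X + Polynomial.C c) = -D := by
    rw [← neg_eq_of_add_eq_zero_left hcomp]  -- may need adjusting
  by_contra hne
  have hm : (Polynomial.X + Polynomial.C c : Polynomial ℂ).Monic := Polynomial.monic_X_add_C c
  have hd : (Polynomial.X + Polynomial.C c : Polynomial ℂ).natDegree = 1 :=
    Polynomial.natDegree_X_add_C c
  have hlc := Polynomial.leadingCoeff_comp (p := D) (q := Polynomial.X + Polynomial.C c)
    (by rw [hd]; norm_num)
  rw [h2, hm.leadingCoeff, one_pow, mul_one] at hlc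
  have : D.leadingCoeff = 0 := by
    have : -D.leadingCoeff = D.leadingCoeff := by
      rw [← Polynomial.leadingCoeff_neg]; exact hlc.symm ▸ rfl
    linear_combination (-1/2 : ℂ) * this
  exact hne (Polynomial.leadingCoeff_eq_zero.mp this)

lemma eval_bern_map (m : ℕ) (z : ℂ) :
    ((Polynomial.bernoulli m).map (algebraMap ℚ ℂ)).eval z = bernoulliPoly m z := by
  rw [Polynomial.eval_map, bernoulliPoly, Polynomial.aeval_def]

lemma bern_expand (m : ℕ) (z : ℂ) :
    bernoulliPoly m z = ∑ i ∈ range (m + 1), ((bernoulli i : ℚ) : ℂ) * (m.choose i : ℂ) * z ^ (m - i) := by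
  rw [bernoulliPoly, Polynomial.bernoulli, map_sum]
  refine Finset.sum_congr rfl fun i _ => ?_
  rw [Polynomial.aeval_monomial]
  rw [eq_ratCast (algebraMap ℚ ℂ)]
  push_cast
  ring

lemma bern_translate (p : ℕ) (x y : ℂ) :
    bernoulliPoly p (x + y)
      = ∑ j ∈ range (p + 1), (p.choose j : ℂ) * bernoulliPoly (p - j) x * y ^ j := by
  have hL : bernoulliPoly p (x + y)
      = ∑ i ∈ range (p + 1), ∑ k ∈ range (p - i + 1),
          ((bernoulli i : ℚ) : ℂ) * (p.choose i : ℂ) * ((p - i).choose k : ℂ)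
            * x ^ k * y ^ (p - i - k) := by
    rw [bern_expand]
    refine Finset.sum_congr rfl fun i _ => ?_
    rw [add_pow, Finset.mul_sum]
    refine Finset.sum_congr rfl fun k _ => ?_
    ring
  have hR : ∑ j ∈ range (p + 1), (p.choose j : ℂ) * bernoulliPoly (p - j) x * y ^ j
      = ∑ j ∈ range (p + 1), ∑ i ∈ range (p - j + 1),
          ((bernoulli i : ℚ) : ℂ) * (p.choose j : ℂ) * ((p - j).choose i : ℂ)
            * x ^ (p - j - i) * y ^ j := by
    refine Finset.sum_congr rfl fun j _ => ?_
    rw [bern_expand, Finset.mul_sum, Finset.sum_mul]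
    refine Finset.sum_congr rfl fun i _ => ?_
    ring
  rw [hL, hR]
  rw [Finset.sum_sigma', Finset.sum_sigma']
  refine Finset.sum_nbij' (fun q => ⟨p - q.1 - q.2, q.1⟩) (fun q => ⟨q.2, p - q.1 - q.2⟩) ?_ ?_ ?_ ?_ ?_
  · rintro ⟨i, k⟩ hq
    simp only [Finset.mem_sigma, Finset.mem_range] at hq ⊢
    omega
  · rintro ⟨j, i⟩ hq
    simp only [Finset.mem_sigma, Finset.mem_range] at hq ⊢
    omega
  · rintro ⟨i, k⟩ hq
    simp only [Finset.mem_sigma, Finset.mem_range] at hq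
    have h1 : p - (p - i - k) - i = k := by omega
    simp only [h1]
  · rintro ⟨j, i⟩ hq
    simp only [Finset.mem_sigma, Finset.mem_range] at hq
    have h1 : p - i - (p - j - i) = j := by omega
    simp only [h1]
  · rintro ⟨i, k⟩ hq
    simp only [Finset.mem_sigma, Finset.mem_range] at hq
    have hik : i + k ≤ p := by omega
    have e1 : p - (p - i - k) = i + k := by omega
    have e2 : p - (p - i - k) - i = k := by omega
    have e3 : i + k - i = k := by omega
    simp only [e1, e2, e3]
    have hc : (p.choose (p - i - k) : ℂ) * ((i + k).choose i : ℂ)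
        = (p.choose i : ℂ) * ((p - i).choose k : ℂ) := by
      have h3 : p - i - k = p - (i + k) := by omega
      have h4 : p.choose (p - (i + k)) = p.choose (i + k) := Nat.choose_symm hik
      have h5 := Nat.choose_mul (n := p) (Nat.le_add_right i k)
      have h6 : i + k - i = k := by omega
      rw [h6] at h5
      rw [h3, h4]
      exact_mod_cast congrArg (Nat.cast : ℕ → ℂ) h5
    calc ((bernoulli i : ℚ) : ℂ) * (p.choose i : ℂ) * ((p - i).choose k : ℂ) * x ^ k * y ^ (p - i - k)
        = (((bernoulli i : ℚ) : ℂ) * x ^ k * y ^ (p - i - k)) * ((p.choose i : ℂ) * ((p - i).choose k : ℂ)) := by ring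
      _ = (((bernoulli i : ℚ) : ℂ) * x ^ k * y ^ (p - i - k)) * ((p.choose (p - i - k) : ℂ) * ((i + k).choose i : ℂ)) := by rw [hc]
      _ = ((bernoulli i : ℚ) : ℂ) * (p.choose (p - i - k) : ℂ) * ((i + k).choose i : ℂ) * x ^ k * y ^ (p - i - k) := by ring

lemma bern_sum (p : ℕ) (x : ℂ) :
    ∑ k ∈ range (p + 1), ((p + 1).choose k : ℂ) * bernoulliPoly k x = (p + 1 : ℂ) * x ^ p := by
  have h := congrArg (fun q => Polynomial.aeval x q) (Polynomial.sum_bernoulli p)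
  simp only [map_sum, Polynomial.aeval_monomial, map_smul] at h
  rw [eq_ratCast (algebraMap ℚ ℂ)] at h
  push_cast at h
  convert h using 2 with k hk
  simp [bernoulliPoly, nsmul_eq_mul, Algebra.smul_def]

lemma bern_diff (p : ℕ) (x : ℂ) :
    bernoulliPoly (p + 1) (x + 1) = bernoulliPoly (p + 1) x + (p + 1 : ℂ) * x ^ p := by
  rw [bern_translate (p + 1) x 1]
  rw [← Finset.sum_range_reflect]
  have key : ∀ j ∈ range (p + 2),
      ((p + 1).choose (p + 2 - 1 - j) : ℂ) * bernoulliPoly (p + 1 - (p + 2 - 1 - j)) x * (1 : ℂ) ^ (p + 2 - 1 - j)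
        = ((p + 1).choose j : ℂ) * bernoulliPoly j x := by
    intro j hj
    have hj' : j ≤ p + 1 := by simpa [Nat.lt_succ_iff] using Finset.mem_range.mp hj
    have e1 : p + 2 - 1 - j = p + 1 - j := by omega
    have e2 : (p + 1).choose (p + 1 - j) = (p + 1).choose j := Nat.choose_symm hj'
    have e3 : p + 1 - (p + 1 - j) = j := by omega
    rw [e1, e2, e3, one_pow, mul_one]
  rw [Finset.sum_congr rfl key, Finset.sum_range_succ, Nat.choose_self, bern_sum]
  push_cast
  ring

lemma sum_odd (n : ℕ) (F : ℕ → ℂ) (h0 : ∀ j ∈ range (n + 2), Even j → F j = 0) :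
    ∑ k ∈ range (n / 2 + 1), F (2 * k + 1) = ∑ j ∈ range (n + 2), F j := by
  rw [← Finset.sum_image (g := fun k => 2 * k + 1) (f := F)
    (by intro a _ b _ hab; have h' : 2 * a + 1 = 2 * b + 1 := hab; omega)]
  apply Finset.sum_subset
  · intro j hj
    simp only [Finset.mem_image, Finset.mem_range] at hj ⊢
    obtain ⟨k, hk, rfl⟩ := hj
    omega
  · intro j hj hj'
    simp only [Finset.mem_image, Finset.mem_range] at hj hj'
    refine h0 j (Finset.mem_range.mpr hj) ?_
    by_contra hodd
    rw [Nat.not_even_iff_odd] at hodd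
    obtain ⟨t, rfl⟩ := hodd
    exact hj' ⟨t, by omega, by ring⟩

lemma bern_odd (n : ℕ) (z h : ℂ) :
    2 * ((n : ℂ) + 1) * ∑ k ∈ range (n / 2 + 1),
        (n.choose (2 * k) : ℂ) * h ^ (2 * k + 1) / (2 * (k : ℂ) + 1) * bernoulliPoly (n - 2 * k) z
      = bernoulliPoly (n + 1) (z + h) - bernoulliPoly (n + 1) (z - h) := by
  have split : bernoulliPoly (n + 1) (z + h) - bernoulliPoly (n + 1) (z - h)
      = ∑ j ∈ range (n + 2), ((n + 1).choose j : ℂ) * bernoulliPoly (n + 1 - j) z * (h ^ j - (-h) ^ j) := by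
    rw [show z - h = z + (-h) by ring, bern_translate, bern_translate, ← Finset.sum_sub_distrib]
    exact Finset.sum_congr rfl fun j _ => by ring
  rw [split, Finset.mul_sum]
  have odd_eq : ∀ k ∈ range (n / 2 + 1),
      2 * ((n : ℂ) + 1) * ((n.choose (2 * k) : ℂ) * h ^ (2 * k + 1) / (2 * (k : ℂ) + 1) * bernoulliPoly (n - 2 * k) z)
        = ((n + 1).choose (2 * k + 1) : ℂ) * bernoulliPoly (n + 1 - (2 * k + 1)) z
            * (h ^ (2 * k + 1) - (-h) ^ (2 * k + 1)) := by
    intro k hk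
    have hodd : Odd (2 * k + 1) := ⟨k, by ring⟩
    rw [hodd.neg_pow]
    have e1 : n + 1 - (2 * k + 1) = n - 2 * k := by omega
    rw [e1]
    have hcast : ((n : ℂ) + 1) * (n.choose (2 * k) : ℂ) = ((n + 1).choose (2 * k + 1) : ℂ) * (2 * (k : ℂ) + 1) := by
      have h5 := Nat.add_one_mul_choose_eq n (2 * k)
      have := congrArg (Nat.cast : ℕ → ℂ) h5
      push_cast at this
      linear_combination this
    have h2k : (2 * (k : ℂ) + 1) ≠ 0 := by
      have : ((2 * k + 1 : ℕ) : ℂ) ≠ 0 := Nat.cast_ne_zero.mpr (by omega)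
      push_cast at this
      exact this
    field_simp
    linear_combination (2 * h ^ (2 * k + 1) * bernoulliPoly (n - 2 * k) z) * hcast
  rw [Finset.sum_congr rfl odd_eq]
  exact sum_odd n (fun j => ((n + 1).choose j : ℂ) * bernoulliPoly (n + 1 - j) z * (h ^ j - (-h) ^ j))
    (fun j _ hev => by
      show ((n + 1).choose j : ℂ) * bernoulliPoly (n + 1 - j) z * (h ^ j - (-h) ^ j) = 0
      rw [hev.neg_pow]; ring)

lemma L_form (n : ℕ) (z : ℂ) :
    2 * ((n : ℂ) + 1) * ∑ k ∈ range (n / 2 + 1),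
        (4 : ℂ) ^ (n - 2 * k) / (2 * (k : ℂ) + 1) * (n.choose (2 * k) : ℂ) * bernoulliPoly (n - 2 * k) z
      = 4 ^ (n + 1) * (bernoulliPoly (n + 1) (z + 1 / 4) - bernoulliPoly (n + 1) (z - 1 / 4)) := by
  rw [← bern_odd n z (1 / 4), Finset.mul_sum, Finset.mul_sum, Finset.mul_sum]
  refine Finset.sum_congr rfl fun k hk => ?_
  have h2k : 2 * k ≤ n := by
    have := Finset.mem_range.mp hk
    omega
  have e : (4 : ℂ) ^ (n - 2 * k) * 4 ^ (2 * k + 1) = 4 ^ (n + 1) := by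
    rw [← pow_add]
    congr 1
    omega
  have h4 : ((4 : ℂ) ^ (2 * k + 1)) ≠ 0 := pow_ne_zero _ (by norm_num)
  have e2 : (4 : ℂ) ^ (n - 2 * k) = 4 ^ (n + 1) * (1 / 4) ^ (2 * k + 1) := by
    rw [div_pow, one_pow]
    field_simp
    linear_combination e
  rw [e2]
  ring

lemma L_feq (n : ℕ) (z : ℂ) :
    (∑ k ∈ range (n / 2 + 1),
        (4 : ℂ) ^ (n - 2 * k) / (2 * (k : ℂ) + 1) * (n.choose (2 * k) : ℂ) * bernoulliPoly (n - 2 * k) z)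
      + (∑ k ∈ range (n / 2 + 1),
        (4 : ℂ) ^ (n - 2 * k) / (2 * (k : ℂ) + 1) * (n.choose (2 * k) : ℂ) * bernoulliPoly (n - 2 * k) (z + 1 / 2))
      = 2 * (4 * z - 1) ^ n := by
  have h1 := L_form n z
  have h2 := L_form n (z + 1 / 2)
  rw [show z + 1 / 2 + 1 / 4 = (z - 1 / 4) + 1 by ring, show z + 1 / 2 - 1 / 4 = z + 1 / 4 by ring] at h2
  have h3 := bern_diff n (z - 1 / 4)
  have e : (4 : ℂ) ^ (n + 1) * (z - 1 / 4) ^ n = 4 * (4 * z - 1) ^ n := by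
    rw [pow_succ, show (4 * z - 1 : ℂ) = 4 * (z - 1 / 4) by ring, mul_pow]
    ring
  have hne : (2 : ℂ) * ((n : ℂ) + 1) ≠ 0 :=
    mul_ne_zero two_ne_zero (Nat.cast_add_one_ne_zero n)
  apply mul_left_cancel₀ hne
  calc 2 * ((n : ℂ) + 1) * ((∑ k ∈ range (n / 2 + 1),
        (4 : ℂ) ^ (n - 2 * k) / (2 * (k : ℂ) + 1) * (n.choose (2 * k) : ℂ) * bernoulliPoly (n - 2 * k) z)
      + (∑ k ∈ range (n / 2 + 1),
        (4 : ℂ) ^ (n - 2 * k) / (2 * (k : ℂ) + 1) * (n.choose (2 * k) : ℂ) * bernoulliPoly (n - 2 * k) (z + 1 / 2)))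
      = 4 ^ (n + 1) * (bernoulliPoly (n + 1) (z + 1 / 4) - bernoulliPoly (n + 1) (z - 1 / 4))
        + 4 ^ (n + 1) * (bernoulliPoly (n + 1) ((z - 1 / 4) + 1) - bernoulliPoly (n + 1) (z + 1 / 4)) := by
        rw [mul_add, h1, h2]
    _ = 2 * ((n : ℂ) + 1) * (2 * (4 * z - 1) ^ n) := by
        rw [h3]
        linear_combination ((n : ℂ) + 1) * e

lemma H_feq (n : ℕ) (z : ℂ) :
    2 ^ n * eulerPoly n (2 * z - 1 / 2) + 2 ^ n * eulerPoly n (2 * (z + 1 / 2) - 1 / 2)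
      = 2 * (4 * z - 1) ^ n := by
  have h := euler_reflect n (2 * z - 1 / 2)
  rw [show 2 * (z + 1 / 2) - 1 / 2 = (2 * z - 1 / 2) + 1 by ring]
  have e : ((2 : ℂ)) ^ n * (2 * (2 * z - 1 / 2) ^ n) = 2 * (4 * z - 1) ^ n := by
    rw [show (4 * z - 1 : ℂ) = 2 * (2 * z - 1 / 2) by ring, mul_pow]
    ring
  linear_combination (2 : ℂ) ^ n * h + e

noncomputable def PL (n : ℕ) : Polynomial ℂ :=
  ∑ k ∈ range (n / 2 + 1),
    Polynomial.C ((4 : ℂ) ^ (n - 2 * k) / (2 * (k : ℂ) + 1) * (n.choose (2 * k) : ℂ))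
      * ((Polynomial.bernoulli (n - 2 * k)).map (algebraMap ℚ ℂ))

noncomputable def PH (n : ℕ) : Polynomial ℂ :=
  Polynomial.C ((2 : ℂ) ^ n) * ∑ k ∈ range (n + 1), Polynomial.C ((1 / 2 ^ k : ℂ)) *
    ∑ j ∈ range (k + 1), Polynomial.C ((-1 : ℂ) ^ j * (k.choose j : ℂ))
      * (Polynomial.C 2 * Polynomial.X - Polynomial.C (1 / 2 : ℂ) + Polynomial.C (j : ℂ)) ^ n

lemma PL_eval (n : ℕ) (w : ℂ) :
    (PL n).eval w = ∑ k ∈ range (n / 2 + 1),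
      (4 : ℂ) ^ (n - 2 * k) / (2 * (k : ℂ) + 1) * (n.choose (2 * k) : ℂ) * bernoulliPoly (n - 2 * k) w := by
  unfold PL
  rw [Polynomial.eval_finset_sum]
  refine Finset.sum_congr rfl fun k _ => ?_
  rw [Polynomial.eval_mul, Polynomial.eval_C, eval_bern_map]

lemma PH_eval (n : ℕ) (w : ℂ) : (PH n).eval w = 2 ^ n * eulerPoly n (2 * w - 1 / 2) := by
  unfold PH eulerPoly
  rw [Polynomial.eval_mul, Polynomial.eval_C, Polynomial.eval_finset_sum]
  congr 1
  refine Finset.sum_congr rfl fun k _ => ?_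
  rw [Polynomial.eval_mul, Polynomial.eval_C, Polynomial.eval_finset_sum]
  congr 1
  refine Finset.sum_congr rfl fun j _ => ?_
  rw [Polynomial.eval_mul, Polynomial.eval_C, Polynomial.eval_pow]
  simp

lemma part1 (n : ℕ) (z : ℂ) :
    ∑ k ∈ range (n / 2 + 1), (4 : ℂ) ^ (n - 2 * k) / (2 * (k : ℂ) + 1)
        * (n.choose (2 * k) : ℂ) * bernoulliPoly (n - 2 * k) z
      = 2 ^ n * eulerPoly n (2 * z - 1 / 2) := by
  have hD : ∀ w : ℂ, (PL n - PH n).eval (w + 1 / 2) + (PL n - PH n).eval w = 0 := by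
    intro w
    simp only [Polynomial.eval_sub, PL_eval, PH_eval]
    have hL := L_feq n w
    have hH := H_feq n w
    linear_combination hL - hH
  have hzero := rigid (PL n - PH n) (1 / 2) hD
  have hPP : PL n = PH n := by rwa [sub_eq_zero] at hzero
  calc ∑ k ∈ range (n / 2 + 1), (4 : ℂ) ^ (n - 2 * k) / (2 * (k : ℂ) + 1)
        * (n.choose (2 * k) : ℂ) * bernoulliPoly (n - 2 * k) z
      = (PL n).eval z := (PL_eval n z).symm
    _ = (PH n).eval z := by rw [hPP]
    _ = 2 ^ n * eulerPoly n (2 * z - 1 / 2) := PH_eval n z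

theorem stmt1 (n : ℕ) (z : ℂ) :
    (∑ k ∈ range (n / 2 + 1), (4 : ℂ) ^ (n - 2 * k) / (2 * k + 1) *
        (n.choose (2 * k) : ℂ) * bernoulliPoly (n - 2 * k) z
      = ∑ j ∈ range (n + 1), (-1 : ℂ) ^ (n - j) * 2 ^ j * (n.choose j : ℂ) *
        eulerPoly j (2 * z)) ∧
    (∑ j ∈ range (n + 1), (-1 : ℂ) ^ (n - j) * 2 ^ j * (n.choose j : ℂ) *
        eulerPoly j (2 * z)
      = 2 ^ n * eulerPoly n (2 * z - 1 / 2)) := by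
  exact ⟨(part1 n z).trans (part2 n z).symm, part2 n z⟩
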